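/- Let Δ = σ + 4m be a fundamental discriminant and Q₀(x,y) = x² + σxy − my². If A₁², A₂² divide Q₀(β₁,1), Q₀(β₂,1) respectively and gcd(A₁,Δ)=1, and e = gcd(A₁, A₂, β₁+β₂+σ), then e² divides β₁+β₂+σ. -/

import Mathlib

/-- `Δ` is a fundamental discriminant of a quadratic field. -/
def IsFundamentalDiscriminant (Δ : ℤ) : Prop :=
  ∃ d : ℤ, Squarefree d ∧
    ((d % 4 = 1 ∧ Δ = d) ∨ ((d % 4 = 2 ∨ d % 4 = 3) ∧ Δ = 4 * d))

theorem gcd_sq_dvd (σ m Δ A₁ A₂ β₁ β₂ : ℤ) (hσ : σ = 0 ∨ σ = 1) (hΔ : Δ = σ + 4 * m)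
    (hfund : IsFundamentalDiscriminant Δ)
    (h1 : A₁ ^ 2 ∣ β₁ ^ 2 + σ * β₁ - m) (h2 : A₂ ^ 2 ∣ β₂ ^ 2 + σ * β₂ - m)
    (hc1 : Int.gcd A₁ Δ = 1) :
    (gcd (gcd A₁ A₂) (β₁ + β₂ + σ)) ^ 2 ∣ (β₁ + β₂ + σ) := by
  set s : ℤ := β₁ + β₂ + σ with hs
  set e : ℤ := gcd (gcd A₁ A₂) s with he
  have heA₁ : e ∣ A₁ := dvd_trans (gcd_dvd_left _ _) (gcd_dvd_left _ _)
  have heA₂ : e ∣ A₂ := dvd_trans (gcd_dvd_left _ _) (gcd_dvd_right _ _)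
  have hes : e ∣ s := gcd_dvd_right _ _
  have he1 : e ^ 2 ∣ β₁ ^ 2 + σ * β₁ - m := dvd_trans (pow_dvd_pow_of_dvd heA₁ 2) h1
  have he2 : e ^ 2 ∣ β₂ ^ 2 + σ * β₂ - m := dvd_trans (pow_dvd_pow_of_dvd heA₂ 2) h2
  have hdiff : e ^ 2 ∣ (β₁ - β₂) * s := by
    have : (β₁ - β₂) * s = (β₁ ^ 2 + σ * β₁ - m) - (β₂ ^ 2 + σ * β₂ - m) := by ring
    rw [this]; exact dvd_sub he1 he2
  -- coprimality of e and β₁ - β₂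
  have hcop : IsCoprime e (β₁ - β₂) := by
    rw [Int.isCoprime_iff_gcd_eq_one]
    have g := (Int.gcd e (β₁ - β₂) : ℤ)
    set g : ℤ := (Int.gcd e (β₁ - β₂) : ℤ) with hg
    have hge : g ∣ e := Int.gcd_dvd_left _ _
    have hgd : g ∣ β₁ - β₂ := Int.gcd_dvd_right _ _
    have hgQ : g ∣ β₁ ^ 2 + σ * β₁ - m := dvd_trans (dvd_trans hge (dvd_pow_self e two_ne_zero)) he1
    have hg2 : g ∣ 2 * β₁ + σ := by
      have : 2 * β₁ + σ = s + (β₁ - β₂) := by rw [hs]; ring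
      rw [this]; exact dvd_add (dvd_trans hge hes) hgd
    have hgΔ : g ∣ Δ := by
      have hσσ : σ ^ 2 = σ := by rcases hσ with h | h <;> simp [h]
      have : Δ = (2 * β₁ + σ) * (2 * β₁ + σ) - 4 * (β₁ ^ 2 + σ * β₁ - m) := by
        rw [hΔ]; nlinarith [hσσ]
      rw [this]
      exact dvd_sub (Dvd.dvd.mul_right hg2 _) (Dvd.dvd.mul_left hgQ 4)
    have hgA : g ∣ A₁ := dvd_trans hge heA₁
    have : g ∣ (Int.gcd A₁ Δ : ℤ) := Int.dvd_coe_gcd hgA hgΔ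
    rw [hc1] at this
    have hnn : 0 ≤ g := Int.ofNat_nonneg _
    have h1' := Int.eq_one_of_dvd_one hnn this
    rw [hg] at h1'
    exact_mod_cast h1'
  have : IsCoprime (e ^ 2) (β₁ - β₂) := IsCoprime.pow_left hcop
  exact this.dvd_of_dvd_mul_left hdiff
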